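/- arXiv:math/0608788 — 4 statements merged into one kernel-verified Lean document; each statement's English description precedes it below -/
import Mathlib

section
/- Let τ = z_r ⋯ z_s be a squarefree monomial in ℂⁿ with index set I = {r, …, s}. For a subset J ⊆ I let V_J = ∩_{i∈J}{z_i = 0}, and for a holomorphic k-form ω let ω_J denote the form obtained by pulling ω back to V_J and extending constantly to ℂⁿ (i.e. setting z_i = 0 and dz_i = 0 for i ∈ J in the coefficients). Define α¹ = α − α_I and recursively α^{i+1} = α^i − Σ_{|I∖J| = i, J ⊆ I} (α^i)_J. Then α = α_I + Σ_{|I∖J|=1} (α¹)_J + ⋯ + Σ_{|I∖J|=s−r} (α^{s−r})_J + α^{s−r+1}, where for each i and each J ⊆ I with |I∖J| = i, the form (α^i)_J vanishes on the divisor ∪_{l ∈ I∖J}{z_l = 0}, and α^{s−r+1} vanishes on {τ = 0} = ∪_{l∈I}{z_l = 0}. -/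
open Complex

abbrev Pt (n : ℕ) := Fin n → ℂ
abbrev Idx (n k : ℕ) := {s : Finset (Fin n) // s.card = k}
abbrev Form (n k : ℕ) := Idx n k → Pt n → ℂ

/-- A form is holomorphic on `Ω` if all its coefficient functions are. -/
def HoloOn {n k : ℕ} (Ω : Set (Pt n)) (α : Form n k) : Prop :=
  ∀ s, DifferentiableOn ℂ (α s) Ω

/-- Wedge product of a `1`-form with coefficients `ω` with a `k`-form `α`. -/
noncomputable def wedge1 {n k : ℕ} (ω : Fin n → Pt n → ℂ) (α : Form n k) : Form n (k + 1) :=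
  fun t z => ∑ j ∈ t.1.attach,
    (-1 : ℂ) ^ ((t.1.filter (fun i => i < j.1)).card) * ω j.1 z *
      α ⟨t.1.erase j.1, by rw [Finset.card_erase_of_mem j.2, t.2]; omega⟩ z

/-- Pullback of `α` to the coordinate subspace `{z_i = 0, i ∈ J}`, extended constantly:
substitute `z_i = 0` and `dz_i = 0` for `i ∈ J`. -/
noncomputable def restrictJ {n k : ℕ} (J : Finset (Fin n)) (α : Form n k) : Form n k :=
  fun s z => if Disjoint s.1 J then α s (fun i => if i ∈ J then 0 else z i) else 0

/-- The (iterated) wedge `(⋀_{j ∈ J} dz_j/z_j) ∧ α`. -/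
noncomputable def logWedge {n k r : ℕ} (J : Finset (Fin n)) (hJ : J.card = r) (α : Form n k) :
    Form n (k + r) :=
  fun t z =>
    if h : J ⊆ t.1 then
      (∏ j ∈ J, (z j)⁻¹) * α ⟨t.1 \ J, by rw [Finset.card_sdiff_of_subset h, t.2, hJ]; omega⟩ z
    else 0

/-- `β` admits a holomorphic extension across `bad` on `Ω`. -/
def ExtendsHolo {n k : ℕ} (Ω : Set (Pt n)) (β : Form n k) (bad : Set (Pt n)) : Prop :=
  ∃ γ : Form n k, HoloOn Ω γ ∧ ∀ s, ∀ z ∈ Ω \ bad, γ s z = β s z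

/-- Coefficients of the logarithmic differential `dσ/σ` of the monomial `z^a`. -/
noncomputable def logCoef {n : ℕ} (a : Fin n → ℕ) : Fin n → Pt n → ℂ :=
  fun j z => (a j : ℂ) / z j

/-- Coefficients of the exterior derivative `dσ` of the monomial `σ = z^a`. -/
noncomputable def dMono {n : ℕ} (a : Fin n → ℕ) : Fin n → Pt n → ℂ :=
  fun j z => (a j : ℂ) * ∏ i, z i ^ (if i = j then a i - 1 else a i)

/-- The recursively defined forms `α⁰ = α`, `αⁱ⁺¹ = αⁱ − Σ_{J ⊆ I, |I∖J| = i} (αⁱ)_J`. -/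
noncomputable def seqA {n k : ℕ} (I : Finset (Fin n)) (α : Form n k) : ℕ → Form n k
  | 0 => α
  | (i + 1) =>
      seqA I α i -
        ∑ J ∈ I.powerset.filter (fun J => (I \ J).card = i), restrictJ J (seqA I α i)

lemma restrictJ_comp {n k : ℕ} (J K : Finset (Fin n)) (β : Form n k) :
    restrictJ J (restrictJ K β) = restrictJ (K ∪ J) β := by
  funext s z
  simp only [restrictJ, Finset.disjoint_union_right]
  by_cases hJ : Disjoint s.1 J <;> by_cases hK : Disjoint s.1 K <;> simp [hJ, hK]
  congr 1
  funext i
  by_cases hiK : i ∈ K <;> by_cases hiJ : i ∈ J <;> simp [hiK, hiJ]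

lemma restrictJ_sub {n k : ℕ} (J : Finset (Fin n)) (β γ : Form n k) :
    restrictJ J (β - γ) = restrictJ J β - restrictJ J γ := by
  funext s z
  simp only [restrictJ, Pi.sub_apply]
  split <;> simp

lemma restrictJ_sum {n k : ℕ} (J : Finset (Fin n)) {ι : Type*} (t : Finset ι)
    (f : ι → Form n k) :
    restrictJ J (∑ x ∈ t, f x) = ∑ x ∈ t, restrictJ J (f x) := by
  funext s z
  simp only [restrictJ, Finset.sum_apply]
  split <;> simp

lemma seqA_vanish {n k : ℕ} (I : Finset (Fin n)) (α : Form n k) :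
    ∀ i, ∀ J ⊆ I, (I \ J).card < i → restrictJ J (seqA I α i) = 0 := by
  intro i
  induction i with
  | zero => intro J _ h; omega
  | succ i ih =>
    intro J hJ h
    have hstep : seqA I α (i + 1) = seqA I α i -
        ∑ K ∈ I.powerset.filter (fun K => (I \ K).card = i),
          restrictJ K (seqA I α i) := rfl
    rw [hstep, restrictJ_sub, restrictJ_sum]
    simp only [restrictJ_comp]
    rcases Nat.lt_or_ge (I \ J).card i with hlt | hge
    · have h1 : restrictJ J (seqA I α i) = 0 := ih J hJ hlt
      have h2 : ∀ K ∈ I.powerset.filter (fun K => (I \ K).card = i),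
          restrictJ (K ∪ J) (seqA I α i) = 0 := by
        intro K hK
        simp only [Finset.mem_filter, Finset.mem_powerset] at hK
        refine ih _ (Finset.union_subset hK.1 hJ) ?_
        calc (I \ (K ∪ J)).card ≤ (I \ J).card :=
              Finset.card_le_card
                (Finset.sdiff_subset_sdiff le_rfl Finset.subset_union_right)
          _ < i := hlt
      rw [h1, Finset.sum_congr rfl h2]
      simp
    · have hJc : (I \ J).card = i := by omega
      rw [Finset.sum_eq_single J]
      · rw [Finset.union_self]
        exact sub_self _
      · intro K hK hne
        simp only [Finset.mem_filter, Finset.mem_powerset] at hK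
        obtain ⟨hKI, hKc⟩ := hK
        have hcard1 : I.card - K.card = i := by
          rw [← Finset.card_sdiff_of_subset hKI, hKc]
        have hcard2 : I.card - J.card = i := by
          rw [← Finset.card_sdiff_of_subset hJ, hJc]
        have hKle : K.card ≤ I.card := Finset.card_le_card hKI
        have hJle : J.card ≤ I.card := Finset.card_le_card hJ
        have hKJ : ¬ K ⊆ J := by
          intro hsub
          exact hne (Finset.eq_of_subset_of_card_le hsub (by omega))
        have hne' : K ∪ J ≠ J := fun hEq => hKJ (hEq ▸ Finset.subset_union_left)
        have hss : J ⊂ K ∪ J :=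
          HasSubset.Subset.ssubset_of_ne Finset.subset_union_right (Ne.symm hne')
        have hlt2 : J.card < (K ∪ J).card := Finset.card_lt_card hss
        have hsubU : K ∪ J ⊆ I := Finset.union_subset hKI hJ
        have hUle : (K ∪ J).card ≤ I.card := Finset.card_le_card hsubU
        refine ih _ hsubU ?_
        rw [Finset.card_sdiff_of_subset hsubU]
        omega
      · intro hJ'
        exact absurd (by simp [Finset.mem_filter, Finset.mem_powerset, hJ, hJc]) hJ'

lemma seqA_decomp {n k : ℕ} (I : Finset (Fin n)) (α : Form n k) :
    ∀ m, α = (∑ i ∈ Finset.range m,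
        ∑ J ∈ I.powerset.filter (fun J => (I \ J).card = i),
          restrictJ J (seqA I α i)) + seqA I α m := by
  intro m
  induction m with
  | zero => simp [seqA]
  | succ m ih =>
    rw [Finset.sum_range_succ]
    have hstep : seqA I α (m + 1) = seqA I α m -
        ∑ K ∈ I.powerset.filter (fun K => (I \ K).card = m),
          restrictJ K (seqA I α m) := rfl
    rw [hstep]
    conv_lhs => rw [ih]
    abel

/-- Proposition 9 of the paper. For `τ = z_r ⋯ z_s` with index set
`I = {r, …, s}` and a holomorphic `k`-form `α` on `ℂⁿ`, the recursive decomposition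
`α = α_I + Σ_{|I∖J|=1} (α¹)_J + ⋯ + Σ_{|I∖J|=s−r} (α^{s−r})_J + α^{s−r+1}` holds
(note `I.card = s − r + 1`), each term `(αⁱ)_J` vanishes on `∪_{l ∈ I∖J} {z_l = 0}`,
and `α^{s−r+1}` vanishes on `{τ = 0}`. -/
theorem prop9 {n k : ℕ} (r s : Fin n) (hrs : r ≤ s) (I : Finset (Fin n))
    (hI : I = Finset.Icc r s) (α : Form n k) (hα : ∀ t, Differentiable ℂ (α t)) :
    α = (∑ i ∈ Finset.range I.card,
          ∑ J ∈ I.powerset.filter (fun J => (I \ J).card = i),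
            restrictJ J (seqA I α i)) + seqA I α I.card ∧
      (∀ i < I.card, ∀ J ∈ I.powerset.filter (fun J => (I \ J).card = i),
        ∀ l ∈ I \ J, restrictJ {l} (restrictJ J (seqA I α i)) = 0) ∧
      (∀ l ∈ I, restrictJ {l} (seqA I α I.card) = 0) := by
  refine ⟨seqA_decomp I α I.card, ?_, ?_⟩
  · intro i hi J hJ l hl
    simp only [Finset.mem_filter, Finset.mem_powerset] at hJ
    obtain ⟨hJI, hJc⟩ := hJ
    rw [restrictJ_comp]
    have hlI : l ∈ I := (Finset.mem_sdiff.mp hl).1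
    refine seqA_vanish I α i (J ∪ {l})
      (Finset.union_subset hJI (Finset.singleton_subset_iff.mpr hlI)) ?_
    have hEq : I \ (J ∪ {l}) = (I \ J).erase l := by
      ext x
      simp only [Finset.mem_sdiff, Finset.mem_union, Finset.mem_erase,
        Finset.mem_singleton, Finset.mem_sdiff]
      tauto
    have hpos : 0 < i := by
      rw [← hJc]
      exact Finset.card_pos.mpr ⟨l, hl⟩
    rw [hEq, Finset.card_erase_of_mem hl, hJc]
    omega
  · intro l hl
    refine seqA_vanish I α I.card {l} (Finset.singleton_subset_iff.mpr hl) ?_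
    rw [Finset.card_sdiff_of_subset (Finset.singleton_subset_iff.mpr hl), Finset.card_singleton]
    have : 0 < I.card := Finset.card_pos.mpr ⟨l, hl⟩
    omega
end

section
/- With the notation of the recursive decomposition for τ = z_r ⋯ z_s and I = {r,…,s}: for each p ≥ 1 and each subset I' ⊆ I with |I∖I'| = p−1, the pullback-restriction (α^p)_{I'} is identically zero, where α¹ = α − α_I and α^{p} = α^{p−1} − Σ_{|I∖J|=p−1} (α^{p−1})_J. -/
open Complex

lemma restrict_restrict {n k : ℕ} (J J' : Finset (Fin n)) (β : Form n k) :
    restrictJ J (restrictJ J' β) = restrictJ (J ∪ J') β := by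
  funext s z
  simp only [restrictJ, Finset.disjoint_union_right]
  by_cases h1 : Disjoint s.1 J <;> by_cases h2 : Disjoint s.1 J' <;> simp [h1, h2]
  congr 1
  funext i
  by_cases hi : i ∈ J <;> by_cases hi' : i ∈ J' <;> simp [hi, hi']

lemma stmt3_aux {n k : ℕ} (I : Finset (Fin n)) (α : Form n k) :
    ∀ p (I' : Finset (Fin n)), I' ⊆ I → (I \ I').card + 1 ≤ p →
      restrictJ I' (seqA I α p) = 0 := by
  intro p
  induction p with
  | zero => intro I' _ h; omega
  | succ q ih =>
    intro I' hI' hc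
    have hstep : seqA I α (q + 1) = seqA I α q -
        ∑ J ∈ I.powerset.filter (fun J => (I \ J).card = q), restrictJ J (seqA I α q) := rfl
    rw [hstep, restrictJ_sub, restrictJ_sum]
    set F := I.powerset.filter (fun J => (I \ J).card = q) with hF
    have hsum : ∑ J ∈ F, restrictJ I' (restrictJ J (seqA I α q)) =
        if I' ∈ F then restrictJ I' (seqA I α q) else 0 := by
      rw [← Finset.sum_ite_eq' F I' (fun _ => restrictJ I' (seqA I α q))]
      apply Finset.sum_congr rfl
      intro J hJ
      rw [restrict_restrict]
      simp only [hF, Finset.mem_filter, Finset.mem_powerset] at hJ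
      by_cases hJI' : J = I'
      · subst hJI'; simp
      · simp only [hJI', if_false]
        apply ih (I' ∪ J) (Finset.union_subset hI' hJ.1)
        have hsub : I \ (I' ∪ J) ⊆ I \ J :=
          Finset.sdiff_subset_sdiff (le_refl I) Finset.subset_union_right
        have hne : I \ (I' ∪ J) ≠ I \ J := by
          intro heq
          have h1 : I \ J ⊆ I \ I' := by
            rw [← heq]
            exact Finset.sdiff_subset_sdiff (le_refl I) Finset.subset_union_left
          have h2 : (I \ J).card ≤ (I \ I').card := Finset.card_le_card h1
          have h3 : I \ J = I \ I' := Finset.eq_of_subset_of_card_le h1 (by omega)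
          apply hJI'
          have h4 : I \ (I \ J) = I \ (I \ I') := by rw [h3]
          rwa [Finset.sdiff_sdiff_eq_self hJ.1, Finset.sdiff_sdiff_eq_self hI'] at h4
        have : (I \ (I' ∪ J)).card < (I \ J).card :=
          Finset.card_lt_card (Finset.ssubset_iff_subset_ne.mpr ⟨hsub, hne⟩)
        omega
    rw [hsum]
    by_cases hmem : I' ∈ F
    · simp [hmem]
    · simp only [hmem, if_false]
      have hne : (I \ I').card ≠ q := by
        intro h
        exact hmem (by simp [hF, Finset.mem_filter, Finset.mem_powerset, hI', h])
      rw [ih I' hI' (by omega)]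
      simp

/-- key induction step in Proposition 9. With `τ = z_r ⋯ z_s`,
`I = {r, …, s}`, and the recursion `α¹ = α − α_I`,
`α^p = α^{p−1} − Σ_{|I∖J| = p−1} (α^{p−1})_J` starting from a holomorphic `k`-form `α`
on `ℂⁿ`: for every `p ≥ 1` and every `I' ⊆ I` with `|I ∖ I'| = p − 1`, the
pullback-restriction `(α^p)_{I'}` vanishes identically. -/
theorem stmt3 {n k : ℕ} (r s : Fin n) (hrs : r ≤ s) (I : Finset (Fin n))
    (hI : I = Finset.Icc r s) (α : Form n k) (hα : ∀ t, Differentiable ℂ (α t))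
    (p : ℕ) (hp : 1 ≤ p) (I' : Finset (Fin n)) (hI' : I' ⊆ I)
    (hcard : (I \ I').card = p - 1) :
    restrictJ I' (seqA I α p) = 0 := by
  exact stmt3_aux I α p I' hI' (by omega)
end

section
/- Let σ = z₁^{a₁} ⋯ z_{r−1}^{a_{r−1}} and τ = z_r ⋯ z_s be monomials in disjoint variables, and let α be a holomorphic k-form on ℂⁿ such that dσ ∧ α vanishes on the divisor {τ = 0} (i.e. its pullback to each {z_i = 0}, r ≤ i ≤ s, is zero). Then there exists a holomorphic k-form α' such that: (i) dσ ∧ α' = 0 identically; (ii) α' vanishes on the divisor {σ = 0}; and (iii) α − α' vanishes on the divisor {τ = 0}. -/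
open Complex

lemma dMono_zero {n : ℕ} (a : Fin n → ℕ) (l : Fin n) (hl : a l = 0) : dMono a l = 0 := by
  funext z; simp [dMono, hl]
lemma dMono_piJ {n : ℕ} (a : Fin n → ℕ) (J : Finset (Fin n)) (hJ : ∀ i ∈ J, a i = 0)
    (l : Fin n) (z : Pt n) :
    dMono a l (fun i => if i ∈ J then 0 else z i) = dMono a l z := by
  unfold dMono
  congr 1
  apply Finset.prod_congr rfl
  intro i _
  by_cases hi : i ∈ J
  · have : a i = 0 := hJ i hi
    have he : (if i = l then a i - 1 else a i) = 0 := by split <;> simp [this]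
    rw [he]; simp
  · simp [hi]

lemma mul_dMono {n : ℕ} (a : Fin n → ℕ) (l : Fin n) (hl : a l ≠ 0) (z : Pt n) :
    z l * dMono a l z = (a l : ℂ) * ∏ i, z i ^ a i := by
  unfold dMono
  rw [mul_left_comm]
  congr 1
  rw [← Finset.mul_prod_erase Finset.univ _ (Finset.mem_univ l),
      ← Finset.mul_prod_erase Finset.univ (fun i => z i ^ a i) (Finset.mem_univ l),
      ← mul_assoc]
  congr 1
  · rw [if_pos rfl, ← pow_succ']
    congr 1
    omega
  · apply Finset.prod_congr rfl
    intro i hi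
    rw [if_neg (Finset.mem_erase.1 hi).1]

-- wedge commutes with restriction (for J in the 'disjoint' variables)
lemma wedge_restrict {n k : ℕ} (a : Fin n → ℕ) (J : Finset (Fin n)) (hJ : ∀ i ∈ J, a i = 0)
    (β : Form n k) :
    wedge1 (dMono a) (restrictJ J β) = restrictJ J (wedge1 (dMono a) β) := by
  funext t z
  simp only [wedge1, restrictJ]
  by_cases hd : Disjoint t.1 J
  · rw [if_pos hd]
    apply Finset.sum_congr rfl
    intro j _
    rw [if_pos (Finset.disjoint_of_subset_left (Finset.erase_subset _ _) hd),
        dMono_piJ a J hJ]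
  · rw [if_neg hd]
    apply Finset.sum_eq_zero
    intro j _
    by_cases hjJ : j.1 ∈ J
    · rw [dMono_zero a j.1 (hJ j.1 hjJ)]
      simp
    · rw [if_neg ?_]
      · ring
      · obtain ⟨i, hit, hiJ⟩ := Finset.not_disjoint_iff.1 hd
        exact Finset.not_disjoint_iff.2 ⟨i, Finset.mem_erase.2 ⟨fun h => hjJ (h ▸ hiJ), hit⟩, hiJ⟩

lemma restrict_of_mem {n m : ℕ} (γ : Form n m) (i : Fin n) (J : Finset (Fin n))
    (hiJ : i ∈ J) (h0 : restrictJ {i} γ = 0) : restrictJ J γ = 0 := by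
  funext t z
  simp only [restrictJ, Pi.zero_apply]
  split
  case isTrue hd =>
    have hit : i ∉ t.1 := fun h => (Finset.disjoint_left.1 hd h) hiJ
    have := congrFun (congrFun h0 t) (fun l => if l ∈ J then 0 else z l)
    simp only [restrictJ, Pi.zero_apply, Finset.disjoint_singleton_right, hit,
      not_false_iff, if_true, if_pos] at this
    have hpt : (fun l => if l ∈ J then (0:ℂ) else z l)
        = (fun l => if l ∈ ({i} : Finset (Fin n)) then 0 else if l ∈ J then 0 else z l) := by
      funext l
      by_cases hl : l = i
      · subst hl; simp [hiJ]
      · simp [Finset.mem_singleton, hl]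
    rw [hpt]
    exact this
  case isFalse => rfl

/-- Inclusion–exclusion candidate `α' = ∑_{∅ ≠ J ⊆ I} (-1)^{|J|+1} (restrictJ J α)`. -/
noncomputable def IE {n k : ℕ} (I : Finset (Fin n)) (α : Form n k) : Form n k :=
  fun t z => -∑ J ∈ I.powerset.erase ∅, (-1 : ℂ) ^ J.card * restrictJ J α t z

lemma IE_holo {n k : ℕ} (I : Finset (Fin n)) (α : Form n k)
    (hα : ∀ t, Differentiable ℂ (α t)) (t : Idx n k) : Differentiable ℂ (IE I α t) := by
  unfold IE
  apply Differentiable.neg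
  apply Differentiable.fun_sum
  intro J _
  apply Differentiable.const_mul
  unfold restrictJ
  by_cases hd : Disjoint t.1 J
  · simp only [hd, if_true]
    have hlin : Differentiable ℂ (fun z : Pt n => (fun i => if i ∈ J then (0:ℂ) else z i)) := by
      apply differentiable_pi.2
      intro i
      by_cases hi : i ∈ J
      · simp only [hi, if_true]; exact differentiable_const 0
      · simp only [hi, if_false]
        exact (ContinuousLinearMap.proj i : (Pt n) →L[ℂ] ℂ).differentiable
    exact (hα t).comp hlin
  · simp only [hd, if_false]
    exact differentiable_const 0

lemma wedge_IE {n k : ℕ} (a : Fin n → ℕ) (I : Finset (Fin n)) (hI : ∀ i ∈ I, a i = 0)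
    (α : Form n k)
    (hyp : ∀ i ∈ I, restrictJ {i} (wedge1 (dMono a) α) = 0) :
    wedge1 (dMono a) (IE I α) = 0 := by
  have key : ∀ J ∈ I.powerset.erase ∅, wedge1 (dMono a) (restrictJ J α) = 0 := by
    intro J hJ
    rw [Finset.mem_erase, Finset.mem_powerset] at hJ
    obtain ⟨hne, hsub⟩ := hJ
    obtain ⟨i, hi⟩ := Finset.nonempty_iff_ne_empty.2 hne
    rw [wedge_restrict a J (fun x hx => hI x (hsub hx)) α]
    exact restrict_of_mem _ i J hi (hyp i (hsub hi))
  funext u z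
  show ∑ j ∈ u.1.attach, _ = (0 : ℂ)
  have : ∀ j : {x // x ∈ u.1},
      (-1 : ℂ) ^ ((u.1.filter (fun i => i < j.1)).card) * dMono a j.1 z *
        IE I α ⟨u.1.erase j.1, by rw [Finset.card_erase_of_mem j.2, u.2]; omega⟩ z
      = -∑ J ∈ I.powerset.erase ∅, (-1 : ℂ) ^ J.card *
          ((-1 : ℂ) ^ ((u.1.filter (fun i => i < j.1)).card) * dMono a j.1 z *
            restrictJ J α ⟨u.1.erase j.1, by rw [Finset.card_erase_of_mem j.2, u.2]; omega⟩ z) := by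
    intro j
    unfold IE
    rw [mul_neg, Finset.mul_sum]
    congr 1
    apply Finset.sum_congr rfl
    intro J _
    ring
  rw [Finset.sum_congr rfl (fun j _ => this j)]
  rw [Finset.sum_neg_distrib, Finset.sum_comm, neg_eq_zero]
  apply Finset.sum_eq_zero
  intro J hJ
  rw [← Finset.mul_sum]
  have := congrFun (congrFun (key J hJ) u) z
  simp only [wedge1, Pi.zero_apply] at this
  rw [this]  -- ?
  simp

lemma restrict_IE {n k : ℕ} (I : Finset (Fin n)) (α : Form n k) (i : Fin n) (hiI : i ∈ I) :
    restrictJ {i} (α - IE I α) = 0 := by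
  funext t z
  simp only [restrictJ, Pi.zero_apply, Pi.sub_apply]
  split
  case isFalse => rfl
  case isTrue hd =>
  have hit : i ∉ t.1 := by
    rw [Finset.disjoint_singleton_right] at hd; exact hd
  set w : Pt n := fun l => if l ∈ ({i} : Finset (Fin n)) then 0 else z l with hw
  have hwi : w i = 0 := by simp [hw]
  have main : ∑ J ∈ I.powerset, (-1 : ℂ) ^ J.card * restrictJ J α t w = 0 := by
    have hins : I = insert i (I.erase i) := (Finset.insert_erase hiI).symm
    have hni : i ∉ I.erase i := Finset.notMem_erase i I
    rw [hins, Finset.sum_powerset_insert hni]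
    rw [← Finset.sum_add_distrib]
    apply Finset.sum_eq_zero
    intro J hJ
    rw [Finset.mem_powerset] at hJ
    have hiJ : i ∉ J := fun h => hni (hJ h)
    have hcard : (insert i J).card = J.card + 1 := Finset.card_insert_of_notMem hiJ
    have hdisj : Disjoint t.1 (insert i J) ↔ Disjoint t.1 J := by
      rw [Finset.disjoint_insert_right]
      exact ⟨fun h => h.2, fun h => ⟨hit, h⟩⟩
    have hpt : (fun l => if l ∈ insert i J then (0:ℂ) else w l)
        = (fun l => if l ∈ J then 0 else w l) := by
      funext l
      by_cases hlJ : l ∈ J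
      · simp [hlJ, Finset.mem_insert_of_mem hlJ]
      · by_cases hli : l = i
        · subst hli; simp [hlJ, hwi]
        · simp [hlJ, hli, Finset.mem_insert]
    simp only [restrictJ, hcard, hdisj, hpt, pow_succ]
    split <;> ring
  -- split off the empty set
  have hsplit : ∑ J ∈ I.powerset, (-1 : ℂ) ^ J.card * restrictJ J α t w
      = α t w + ∑ J ∈ I.powerset.erase ∅, (-1 : ℂ) ^ J.card * restrictJ J α t w := by
    rw [← Finset.add_sum_erase _ _ (Finset.empty_mem_powerset I)]
    congr 1
    simp [restrictJ]
  have hIE : IE I α t w = α t w := by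
    unfold IE
    have h2 := hsplit.symm.trans main
    linear_combination -h2
  rw [hIE, sub_self]

open Filter Topology in
lemma vanish_of_wedge_zero {n k : ℕ} (a : Fin n → ℕ) (β : Form n k)
    (hβ : ∀ t, Differentiable ℂ (β t)) (hw : wedge1 (dMono a) β = 0)
    (j : Fin n) (haj : a j ≠ 0) : restrictJ {j} β = 0 := by
  funext t z
  simp only [restrictJ, Pi.zero_apply]
  split
  case isFalse => rfl
  case isTrue hd =>
  have hjt : j ∉ t.1 := by rw [Finset.disjoint_singleton_right] at hd; exact hd
  set w : Pt n := fun l => if l ∈ ({j} : Finset (Fin n)) then 0 else z l with hwdef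
  have hwj : w j = 0 := by simp [hwdef]
  show β t w = 0
  have hu : (insert j t.1).card = k + 1 := by
    rw [Finset.card_insert_of_notMem hjt, t.2]
  have hju : j ∈ insert j t.1 := Finset.mem_insert_self j t.1
  -- the path approaching w
  set p : ℂ → Pt n := fun ζ i => if a i = 0 then w i else if i = j then ζ^2 else w i + ζ
    with hpdef
  have hp0 : p 0 = w := by
    funext i
    simp only [hpdef]
    by_cases h1 : a i = 0
    · simp [h1]
    · by_cases h2 : i = j
      · subst h2; simp [h1, hwj]
      · simp [h1, h2]
  have hpc : Continuous p := by
    apply continuous_pi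
    intro i
    by_cases h1 : a i = 0
    · simp only [hpdef, if_pos h1]; exact continuous_const
    · by_cases h2 : i = j
      · simp only [hpdef, if_neg h1, if_pos h2]; exact continuous_pow 2
      · simp only [hpdef, if_neg h1, if_neg h2]; exact continuous_const.add continuous_id
  have hpj : ∀ ζ, p ζ j = ζ^2 := fun ζ => by simp [hpdef, haj]
  have haj' : (a j : ℂ) ≠ 0 := Nat.cast_ne_zero.2 haj
  -- good event
  have hev : ∀ᶠ ζ in 𝓝[≠] (0:ℂ), ∀ i, a i ≠ 0 → p ζ i ≠ 0 := by
    rw [Filter.eventually_all]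
    intro i
    by_cases h1 : a i = 0
    · filter_upwards with ζ h; exact absurd h1 h
    · by_cases h2 : i = j
      · subst h2
        filter_upwards [self_mem_nhdsWithin] with ζ hζ _
        rw [hpj]
        exact pow_ne_zero 2 (by simpa using hζ)
      · have hplz : ∀ ζ : ℂ, p ζ i = w i + ζ := fun ζ => by simp [hpdef, h1, h2]
        by_cases h3 : w i = 0
        · filter_upwards [self_mem_nhdsWithin] with ζ hζ _
          rw [hplz, h3, zero_add]
          simpa using hζ
        · have hne : (0:ℂ) ≠ -w i := fun h => h3 (neg_eq_zero.1 h.symm)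
          filter_upwards [(eventually_ne_nhds hne).filter_mono nhdsWithin_le_nhds] with ζ hζ _
          rw [hplz]
          intro hc
          exact hζ (by linear_combination hc)
  -- pieces of the wedge relation on the (k+1)-set insert j t
  set C : {x // x ∈ insert j t.1} → ℂ :=
    fun l => (-1:ℂ) ^ (((insert j t.1).filter (fun i => i < l.1)).card) with hCdef
  set Bl : {x // x ∈ insert j t.1} → Pt n → ℂ :=
    fun l => β ⟨(insert j t.1).erase l.1,
      by rw [Finset.card_erase_of_mem l.2, hu]; omega⟩ with hBldef
  set jU : {x // x ∈ insert j t.1} := ⟨j, hju⟩ with hjUdef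
  have hBt : Bl jU = β t := by
    show β ⟨(insert j t.1).erase j, _⟩ = β t
    exact congrArg β (Subtype.ext (Finset.erase_insert hjt))
  have hrel : ∀ q : Pt n,
      ∑ l ∈ (insert j t.1).attach, C l * dMono a l.1 q * Bl l q = 0 := by
    intro q
    exact congrFun (congrFun hw ⟨insert j t.1, hu⟩) q
  have hCj : C jU ≠ 0 := pow_ne_zero _ (neg_ne_zero.2 one_ne_zero)
  -- the comparison function
  set g : ℂ → ℂ := fun ζ => -(C jU)⁻¹ * ∑ l ∈ (insert j t.1).attach.erase jU,
      C l * (((a l.1 : ℂ) * ζ^2) / ((a j : ℂ) * (w l.1 + ζ))) * Bl l (p ζ) with hgdef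
  -- eventual equality
  have heq : ∀ᶠ ζ in 𝓝[≠] (0:ℂ), β t (p ζ) = g ζ := by
    filter_upwards [hev, self_mem_nhdsWithin] with ζ hgood hζ0
    have hζ0' : ζ ≠ 0 := by simpa using hζ0
    have hωj : dMono a j (p ζ) ≠ 0 := by
      unfold dMono
      apply mul_ne_zero haj'
      rw [Finset.prod_ne_zero_iff]
      intro i _
      by_cases h1 : a i = 0
      · have hij : i ≠ j := fun h => haj (h ▸ h1)
        rw [if_neg hij, h1, pow_zero]
        exact one_ne_zero
      · exact pow_ne_zero _ (hgood i h1)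
    have hratio : ∀ l ∈ (insert j t.1).attach.erase jU,
        dMono a l.1 (p ζ)
          = (((a l.1 : ℂ) * ζ^2) / ((a j : ℂ) * (w l.1 + ζ))) * dMono a j (p ζ) := by
      intro l hl
      have hlj : l.1 ≠ j := by
        intro h
        exact (Finset.mem_erase.1 hl).1 (Subtype.ext h)
      by_cases hal : a l.1 = 0
      · rw [dMono_zero a l.1 hal]
        simp [hal]
      · have hplv : p ζ l.1 = w l.1 + ζ := by simp [hpdef, hal, hlj]
        have hpl0 : w l.1 + ζ ≠ 0 := hplv ▸ hgood l.1 hal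
        have hA := mul_dMono a l.1 hal (p ζ)
        have hB := mul_dMono a j haj (p ζ)
        rw [hplv] at hA
        rw [hpj ζ] at hB
        rw [div_mul_eq_mul_div, eq_comm, div_eq_iff (mul_ne_zero haj' hpl0)]
        linear_combination (a l.1 : ℂ) * hB - (a j : ℂ) * hA
    have h1 := hrel (p ζ)
    rw [← Finset.add_sum_erase _ _ (Finset.mem_attach _ jU)] at h1
    have h2 : ∑ l ∈ (insert j t.1).attach.erase jU, C l * dMono a l.1 (p ζ) * Bl l (p ζ)
        = dMono a j (p ζ) * ∑ l ∈ (insert j t.1).attach.erase jU,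
            C l * (((a l.1 : ℂ) * ζ^2) / ((a j : ℂ) * (w l.1 + ζ))) * Bl l (p ζ) := by
      rw [Finset.mul_sum]
      apply Finset.sum_congr rfl
      intro l hl
      rw [hratio l hl]
      ring
    rw [h2, hBt] at h1
    set S : ℂ := ∑ l ∈ (insert j t.1).attach.erase jU,
        C l * (((a l.1 : ℂ) * ζ^2) / ((a j : ℂ) * (w l.1 + ζ))) * Bl l (p ζ) with hS
    have h1' : C jU * dMono a j (p ζ) * β t (p ζ) + dMono a j (p ζ) * S = 0 := h1
    show β t (p ζ) = -(C jU)⁻¹ * S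
    have hinv : C jU * (C jU)⁻¹ = 1 := mul_inv_cancel₀ hCj
    have key : C jU * dMono a j (p ζ) * β t (p ζ)
        = C jU * dMono a j (p ζ) * (-(C jU)⁻¹ * S) := by
      linear_combination h1' + (dMono a j (p ζ) * S) * hinv
    exact mul_left_cancel₀ (mul_ne_zero hCj hωj) key
  -- limits
  have hb : ∀ l : {x // x ∈ insert j t.1},
      Tendsto (fun ζ => Bl l (p ζ)) (𝓝[≠] (0:ℂ)) (𝓝 (Bl l w)) := by
    intro l
    have h := ((hβ ⟨(insert j t.1).erase l.1,
        by rw [Finset.card_erase_of_mem l.2, hu]; omega⟩).continuous.comp hpc).tendsto 0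
    rw [Function.comp_apply, hp0] at h
    exact (h.mono_left nhdsWithin_le_nhds)
  have hq : ∀ l : {x // x ∈ insert j t.1},
      Tendsto (fun ζ : ℂ => ((a l.1 : ℂ) * ζ^2) / ((a j : ℂ) * (w l.1 + ζ)))
        (𝓝[≠] (0:ℂ)) (𝓝 0) := by
    intro l
    by_cases hwl : w l.1 = 0
    · have base : Tendsto (fun ζ : ℂ => ((a l.1 : ℂ) / (a j : ℂ)) * ζ)
          (𝓝[≠] (0:ℂ)) (𝓝 0) := by
        have h0 : Tendsto (fun ζ : ℂ => ((a l.1 : ℂ) / (a j : ℂ)) * ζ) (𝓝 (0:ℂ))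
            (𝓝 (((a l.1 : ℂ) / (a j : ℂ)) * 0)) := (continuous_const.mul continuous_id).tendsto 0
        rw [mul_zero] at h0
        exact h0.mono_left nhdsWithin_le_nhds
      apply base.congr'
      filter_upwards [self_mem_nhdsWithin] with ζ hζ
      have hζ' : ζ ≠ 0 := by simpa using hζ
      rw [hwl, zero_add]
      field_simp
    · have hnum : Tendsto (fun ζ : ℂ => (a l.1 : ℂ) * ζ^2) (𝓝 (0:ℂ))
          (𝓝 ((a l.1 : ℂ) * 0^2)) := (continuous_const.mul (continuous_pow 2)).tendsto 0
      have hden : Tendsto (fun ζ : ℂ => (a j : ℂ) * (w l.1 + ζ)) (𝓝 (0:ℂ))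
          (𝓝 ((a j : ℂ) * (w l.1 + 0))) :=
        (continuous_const.mul (continuous_const.add continuous_id)).tendsto 0
      have hne : (a j : ℂ) * (w l.1 + 0) ≠ 0 := by
        rw [add_zero]; exact mul_ne_zero haj' hwl
      have := hnum.div hden hne
      simp only [ne_eq, OfNat.ofNat_ne_zero, not_false_eq_true, zero_pow, mul_zero,
        zero_div] at this
      exact this.mono_left nhdsWithin_le_nhds
  have hg0 : Tendsto g (𝓝[≠] (0:ℂ)) (𝓝 0) := by
    have hsum : Tendsto (fun ζ : ℂ => ∑ l ∈ (insert j t.1).attach.erase jU,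
        C l * (((a l.1 : ℂ) * ζ^2) / ((a j : ℂ) * (w l.1 + ζ))) * Bl l (p ζ))
        (𝓝[≠] (0:ℂ)) (𝓝 0) := by
      have : Tendsto (fun ζ : ℂ => ∑ l ∈ (insert j t.1).attach.erase jU,
          C l * (((a l.1 : ℂ) * ζ^2) / ((a j : ℂ) * (w l.1 + ζ))) * Bl l (p ζ))
          (𝓝[≠] (0:ℂ)) (𝓝 (∑ l ∈ (insert j t.1).attach.erase jU, (0:ℂ))) := by
        apply tendsto_finset_sum
        intro l _
        have := (tendsto_const_nhds (x := C l)).mul (hq l)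
        rw [mul_zero] at this
        have := this.mul (hb l)
        rw [zero_mul] at this
        exact this
      simpa using this
    have := hsum.const_mul (-(C jU)⁻¹)
    rw [mul_zero] at this
    exact this
  haveI : (𝓝[≠] (0:ℂ)).NeBot := inferInstance
  have hcont : Tendsto (fun ζ => β t (p ζ)) (𝓝[≠] (0:ℂ)) (𝓝 (β t w)) := by
    have h := ((hβ t).continuous.comp hpc).tendsto 0
    rw [Function.comp_apply, hp0] at h
    exact h.mono_left nhdsWithin_le_nhds
  exact tendsto_nhds_unique hcont ((Filter.tendsto_congr' heq).2 hg0)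

/-- Lemma 7 of the paper. Let `σ = z₁^{a₁} ⋯ z_{r−1}^{a_{r−1}}` and
`τ = z_r ⋯ z_s` be monomials in disjoint variables (`a i = 0` for `i ∈ I = {r, …, s}`),
and let `α` be a holomorphic `k`-form on `ℂⁿ` such that `dσ ∧ α` vanishes on the divisor
`{τ = 0}` (its pullback to each `{z_i = 0}`, `i ∈ I`, is zero). Then there is a
holomorphic `k`-form `α'` with (i) `dσ ∧ α' = 0` identically, (ii) `α'` vanishes on the
divisor `{σ = 0}`, and (iii) `α − α'` vanishes on the divisor `{τ = 0}`. -/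
theorem lemma7 {n k : ℕ} (r s : Fin n) (hrs : r ≤ s) (I : Finset (Fin n))
    (hI : I = Finset.Icc r s) (a : Fin n → ℕ) (hdisj : ∀ i ∈ I, a i = 0)
    (α : Form n k) (hα : ∀ t, Differentiable ℂ (α t))
    (hyp : ∀ i ∈ I, restrictJ {i} (wedge1 (dMono a) α) = 0) :
    ∃ α' : Form n k, (∀ t, Differentiable ℂ (α' t)) ∧
      wedge1 (dMono a) α' = 0 ∧
      (∀ j : Fin n, a j ≠ 0 → restrictJ {j} α' = 0) ∧
      (∀ i ∈ I, restrictJ {i} (α - α') = 0) := by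
  exact ⟨IE I α, IE_holo I α hα, wedge_IE a I hdisj α hyp,
    fun j hj => vanish_of_wedge_zero a (IE I α) (IE_holo I α hα) (wedge_IE a I hdisj α hyp) j hj,
    fun i hi => restrict_IE I α i hi⟩
end

section
/- Let α be a holomorphic k-form on an open set Ω ⊆ ℂⁿ such that (dz_j/z_j) ∧ α is holomorphic for every j in a set S of indices. Then for every r ≥ 1 and every choice of distinct indices j₁, …, j_r ∈ S, the form (dz_{j₁}/z_{j₁}) ∧ ⋯ ∧ (dz_{j_r}/z_{j_r}) ∧ α extends to a holomorphic (k+r)-form on Ω. -/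
open Complex

namespace Stmt6Aux

open Metric Set Filter MeasureTheory intervalIntegral
open scoped Topology Real

variable {n : ℕ}

/-- Replace the `j`-th coordinate. -/
noncomputable def upd (j : Fin n) (x : Pt n) (w : ℂ) : Pt n := Function.update x j w

lemma upd_j (j : Fin n) (x : Pt n) (w : ℂ) : upd j x w j = w := by
  simp [upd]

lemma upd_self (j : Fin n) (x : Pt n) (h : x j = 0) : upd j x 0 = x := by
  rw [upd, ← h, Function.update_eq_self]

lemma upd_self' (j : Fin n) (x : Pt n) : upd j x (x j) = x := by
  rw [upd, Function.update_eq_self]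

/-- The projection onto coordinate `j`, as a continuous linear map. -/
noncomputable def Pj (j : Fin n) : Pt n →L[ℂ] ℂ := ContinuousLinearMap.proj j

/-- The derivative of `x ↦ upd j x w`. -/
noncomputable def Uj (j : Fin n) : Pt n →L[ℂ] Pt n :=
  ContinuousLinearMap.id ℂ (Pt n) - (Pj j).smulRight ((Pi.single j 1 : Pt n))

lemma Uj_apply (j : Fin n) (x : Pt n) : Uj j x = x - (x j) • (Pi.single j 1 : Pt n) := rfl

lemma upd_eq_affine (j : Fin n) (w : ℂ) (x : Pt n) :
    upd j x w = Uj j x + w • (Pi.single j 1 : Pt n) := by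
  funext i
  rcases eq_or_ne i j with rfl | hij
  · simp [upd, Uj_apply, Pi.single_eq_same, Pj]
  · simp [upd, Function.update_apply, hij, Uj_apply, Pi.single_eq_of_ne hij, Pj]

lemma norm_Pj_le (j : Fin n) : ‖Pj j‖ ≤ 1 := by
  refine ContinuousLinearMap.opNorm_le_bound _ zero_le_one fun v => ?_
  rw [one_mul]
  exact norm_le_pi_norm v j

lemma norm_single_le (j : Fin n) (a : ℂ) : ‖(Pi.single j a : Pt n)‖ ≤ ‖a‖ := by
  refine (pi_norm_le_iff_of_nonneg (norm_nonneg a)).2 fun i => ?_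
  rcases eq_or_ne i j with rfl | hij
  · simp [Pi.single_eq_same]
  · simp [Pi.single_eq_of_ne hij]

lemma norm_Uj_le (j : Fin n) : ‖Uj j‖ ≤ 2 := by
  refine ContinuousLinearMap.opNorm_le_bound _ (by norm_num) fun v => ?_
  rw [Uj_apply]
  calc ‖v - v j • (Pi.single j 1 : Pt n)‖ ≤ ‖v‖ + ‖v j • (Pi.single j 1 : Pt n)‖ := norm_sub_le _ _
    _ ≤ ‖v‖ + ‖v j‖ * 1 := by
        refine add_le_add le_rfl ?_
        rw [norm_smul]
        exact mul_le_mul_of_nonneg_left (by simpa using norm_single_le j 1) (norm_nonneg _)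
    _ ≤ ‖v‖ + ‖v‖ := by
        refine add_le_add le_rfl ?_
        rw [mul_one]; exact norm_le_pi_norm v j
    _ = 2 * ‖v‖ := by ring

lemma hasFDerivAt_upd (j : Fin n) (w : ℂ) (x : Pt n) :
    HasFDerivAt (fun x : Pt n => upd j x w) (Uj j) x := by
  have heq : (fun x : Pt n => upd j x w) = fun x => Uj j x + w • (Pi.single j 1 : Pt n) :=
    funext fun x => upd_eq_affine j w x
  rw [heq]
  exact (Uj j).hasFDerivAt.add_const _

lemma continuous_upd_w (j : Fin n) (x : Pt n) : Continuous (fun w : ℂ => upd j x w) := by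
  have heq : (fun w : ℂ => upd j x w) = fun w => Uj j x + w • (Pi.single j 1 : Pt n) :=
    funext fun w => upd_eq_affine j w x
  rw [heq]
  exact continuous_const.add (continuous_id.smul continuous_const)

lemma differentiableAt_upd_w (j : Fin n) (x : Pt n) (w : ℂ) :
    DifferentiableAt ℂ (fun w : ℂ => upd j x w) w := by
  have heq : (fun w : ℂ => upd j x w) = fun w => Uj j x + w • (Pi.single j 1 : Pt n) :=
    funext fun w => upd_eq_affine j w x
  rw [heq]
  exact (differentiableAt_id.smul_const _).const_add _

lemma coord_norm_le (x y : Pt n) (i : Fin n) : ‖x i - y i‖ ≤ ‖x - y‖ := by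
  simpa using norm_le_pi_norm (x - y) i

lemma norm_upd_sub_le (j : Fin n) (x y : Pt n) (w : ℂ) (hy : y j = 0) :
    ‖upd j x w - y‖ ≤ max ‖w‖ ‖x - y‖ := by
  refine (pi_norm_le_iff_of_nonneg (le_max_of_le_left (norm_nonneg w))).2 fun i => ?_
  rcases eq_or_ne i j with rfl | hij
  · simp only [Pi.sub_apply, upd_j, hy, sub_zero]
    exact le_max_left _ _
  · have : (upd j x w - y) i = x i - y i := by simp [upd, Function.update_apply, hij]
    rw [this]
    exact le_max_of_le_right (coord_norm_le x y i)

/-- Cauchy-type estimate: a bound on a holomorphic function on a ball bounds its derivative. -/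
lemma norm_fderiv_le {f : Pt n → ℂ} {y : Pt n} {ρ M : ℝ} (hρ : 0 < ρ)
    (hdf : ∀ x ∈ ball y ρ, DifferentiableAt ℂ f x)
    (hM : ∀ x ∈ ball y ρ, ‖f x‖ ≤ M) :
    ‖fderiv ℂ f y‖ ≤ (2 * M + 1) / ρ := by
  have hy : y ∈ ball y ρ := mem_ball_self hρ
  have hM0 : 0 ≤ M := (norm_nonneg _).trans (hM y hy)
  refine ContinuousLinearMap.opNorm_le_bound _ (by positivity) fun v => ?_
  rcases eq_or_ne v 0 with rfl | hv
  · simp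
  have hvn : 0 < ‖v‖ := norm_pos_iff.2 hv
  have hρ'p : 0 < ρ / ‖v‖ := div_pos hρ hvn
  have hmem : ∀ w : ℂ, w ∈ ball (0 : ℂ) (ρ / ‖v‖) → y + w • v ∈ ball y ρ := by
    intro w hw
    rw [mem_ball, dist_eq_norm] at hw ⊢
    have h1 : ‖y + w • v - y‖ = ‖w‖ * ‖v‖ := by rw [add_sub_cancel_left, norm_smul]
    rw [h1]
    have h2 : ‖w‖ < ρ / ‖v‖ := by simpa using hw
    calc ‖w‖ * ‖v‖ < ρ / ‖v‖ * ‖v‖ := by exact mul_lt_mul_of_pos_right h2 hvn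
      _ = ρ := div_mul_cancel₀ _ hvn.ne'
  have hφd : DifferentiableOn ℂ (fun w : ℂ => f (y + w • v)) (ball (0 : ℂ) (ρ / ‖v‖)) := by
    intro w hw
    have h1 : DifferentiableAt ℂ (fun w : ℂ => y + w • v) w :=
      (differentiableAt_id.smul_const v).const_add y
    exact ((hdf _ (hmem w hw)).comp w h1).differentiableWithinAt
  have hmaps : MapsTo (fun w : ℂ => f (y + w • v)) (ball (0 : ℂ) (ρ / ‖v‖))
      (ball (f (y + (0 : ℂ) • v)) (2 * M + 1)) := by
    intro w hw
    rw [mem_ball, dist_eq_norm]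
    have h0 : y + (0 : ℂ) • v = y := by simp
    calc ‖f (y + w • v) - f (y + (0 : ℂ) • v)‖
        ≤ ‖f (y + w • v)‖ + ‖f (y + (0 : ℂ) • v)‖ := norm_sub_le _ _
      _ ≤ M + M := add_le_add (hM _ (hmem w hw)) (by rw [h0]; exact hM y hy)
      _ < 2 * M + 1 := by linarith
  have hS := Complex.norm_deriv_le_div_of_mapsTo_ball hφd (hmaps.mono_right ball_subset_closedBall) hρ'p
  have hder : HasDerivAt (fun w : ℂ => f (y + w • v)) (fderiv ℂ f y v) 0 := by
    have h1 : HasDerivAt (fun w : ℂ => y + w • v) v 0 := by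
      simpa using ((hasDerivAt_id (0 : ℂ)).smul_const v).const_add y
    have h2 : HasFDerivAt f (fderiv ℂ f y) ((fun w : ℂ => y + w • v) 0) := by
      simpa using (hdf y hy).hasFDerivAt
    exact h2.comp_hasDerivAt 0 h1
  rw [hder.deriv] at hS
  calc ‖fderiv ℂ f y v‖ ≤ (2 * M + 1) / (ρ / ‖v‖) := hS
    _ = (2 * M + 1) / ρ * ‖v‖ := by field_simp

/-- A continuous function on `Ω` vanishing at all points whose `T`-coordinates are nonzero and
whose other coordinates agree with `x₀` vanishes at `x₀`. -/
lemma perturb_limit {Ω : Set (Pt n)} (hΩ : IsOpen Ω) {h : Pt n → ℂ}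
    (hc : ContinuousOn h Ω) (T : Finset (Fin n)) {x₀ : Pt n} (hx₀ : x₀ ∈ Ω)
    (hvan : ∀ x ∈ Ω, (∀ i ∈ T, x i ≠ 0) → (∀ i, i ∉ T → x i = x₀ i) → h x = 0) :
    h x₀ = 0 := by
  classical
  set p : ℂ → Pt n := fun ε i => if i ∈ T then x₀ i + ε else x₀ i with hp
  have hpc : Continuous p := by
    apply continuous_pi
    intro i
    by_cases hi : i ∈ T
    · simpa [hp, hi] using continuous_add_left (x₀ i)
    · simpa [hp, hi] using (continuous_const : Continuous fun _ : ℂ => x₀ i)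
  have hp0 : p 0 = x₀ := by
    funext i; by_cases hi : i ∈ T <;> simp [hp, hi]
  set Bad : Set ℂ := insert 0 ((fun i => -x₀ i) '' (T : Set (Fin n))) with hBad
  have hBadfin : Bad.Finite := (((T : Set (Fin n)).toFinite).image _).insert 0
  have hne : (𝓝[Badᶜ] (0 : ℂ)).NeBot := by
    rw [← mem_closure_iff_nhdsWithin_neBot, (hBadfin.countable.dense_compl ℂ).closure_eq]
    trivial
  have htendp : Filter.Tendsto p (𝓝[Badᶜ] 0) (𝓝 x₀) := by
    rw [← hp0]
    exact (hpc.tendsto 0).mono_left nhdsWithin_le_nhds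
  have htend : Filter.Tendsto (fun ε => h (p ε)) (𝓝[Badᶜ] 0) (𝓝 (h x₀)) :=
    ((hc.continuousAt (hΩ.mem_nhds hx₀)).tendsto).comp htendp
  have hzero : ∀ᶠ ε in 𝓝[Badᶜ] (0 : ℂ), h (p ε) = 0 := by
    have hev : ∀ᶠ ε in 𝓝[Badᶜ] (0 : ℂ), p ε ∈ Ω := by
      have h1 : ∀ᶠ ε in 𝓝 (0 : ℂ), p ε ∈ Ω := by
        have := hpc.continuousAt (x := (0 : ℂ))
        exact this.preimage_mem_nhds (by rw [hp0]; exact hΩ.mem_nhds hx₀)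
      exact h1.filter_mono nhdsWithin_le_nhds
    have hevBad : ∀ᶠ ε in 𝓝[Badᶜ] (0 : ℂ), ε ∈ Badᶜ := eventually_mem_nhdsWithin
    filter_upwards [hev, hevBad] with ε h1 h2
    refine hvan _ h1 ?_ ?_
    · intro i hi
      simp only [hp, if_pos hi]
      intro heq
      apply h2
      rw [hBad]
      refine Set.mem_insert_iff.2 (Or.inr ⟨i, hi, ?_⟩)
      have : ε = -x₀ i := by linear_combination heq
      rw [this]
    · intro i hi
      simp [hp, hi]
  have h2 : Filter.Tendsto (fun ε => h (p ε)) (𝓝[Badᶜ] 0) (𝓝 0) :=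
    Filter.Tendsto.congr' (hzero.mono fun ε he => he.symm) tendsto_const_nhds
  exact tendsto_nhds_unique htend h2

set_option maxHeartbeats 2000000 in
/-- Local division: near a point of the hyperplane `{x j = 0}`, a holomorphic function
vanishing on the hyperplane is divisible by `x j` with holomorphic quotient. -/
lemma local_division {Ω : Set (Pt n)} (hΩ : IsOpen Ω) (j : Fin n) {f : Pt n → ℂ}
    (hf : DifferentiableOn ℂ f Ω)
    (hvan : ∀ x ∈ Ω, x j = 0 → f x = 0)
    {x₀ : Pt n} (hx₀ : x₀ ∈ Ω) (hx₀j : x₀ j = 0) :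
    ∃ ε > 0, ∃ G : Pt n → ℂ,
      (∀ x ∈ ball x₀ ε, DifferentiableAt ℂ G x) ∧
      (∀ x ∈ ball x₀ ε, f x = x j * G x) := by
  classical
  have hdAt : ∀ x ∈ Ω, DifferentiableAt ℂ f x := fun x hx => hf.differentiableAt (hΩ.mem_nhds hx)
  obtain ⟨R, hR, hRΩ⟩ : ∃ R > 0, closedBall x₀ R ⊆ Ω := by
    rcases (Metric.nhds_basis_closedBall.mem_iff).1 (hΩ.mem_nhds hx₀) with ⟨R, hR, hsub⟩
    exact ⟨R, hR, hsub⟩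
  set r : ℝ := R / 2 with hrdef
  set ε : ℝ := R / 4 with hεdef
  have hr : 0 < r := by rw [hrdef]; linarith
  have hε : 0 < ε := by rw [hεdef]; linarith
  have hεr : ε < r := by rw [hεdef, hrdef]; linarith
  have hsubΩ : closedBall x₀ r ⊆ Ω :=
    fun y hy => hRΩ (closedBall_subset_closedBall (by rw [hrdef]; linarith) hy)
  have htube : ∀ x ∈ ball x₀ ε, ∀ w : ℂ, ‖w‖ ≤ r → upd j x w ∈ closedBall x₀ r := by
    intro x hx w hw
    rw [mem_closedBall, dist_eq_norm]
    refine (norm_upd_sub_le j x x₀ w hx₀j).trans ?_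
    rw [mem_ball, dist_eq_norm] at hx
    exact max_le hw (hx.le.trans hεr.le)
  have hballΩ : ball x₀ ε ⊆ Ω := by
    intro x hx
    apply hsubΩ
    rw [mem_ball] at hx
    exact mem_closedBall.2 (le_of_lt (hx.trans hεr))
  obtain ⟨M₀, hM₀⟩ := (isCompact_closedBall x₀ R).exists_bound_of_continuousOn
    (hf.continuousOn.mono hRΩ)
  set M : ℝ := max M₀ 0 with hMdef
  have hM : ∀ y ∈ closedBall x₀ R, ‖f y‖ ≤ M := fun y hy => (hM₀ y hy).trans (le_max_left _ _)
  have hM0 : 0 ≤ M := le_max_right _ _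
  have hrR : closedBall x₀ r ⊆ closedBall x₀ R :=
    closedBall_subset_closedBall (by rw [hrdef]; linarith)
  have hfd_bound : ∀ y ∈ closedBall x₀ r, ‖fderiv ℂ f y‖ ≤ (2 * M + 1) / r := by
    intro y hy
    refine norm_fderiv_le hr ?_ ?_
    · intro x hx
      refine hdAt x (hRΩ ?_)
      rw [mem_closedBall]
      rw [mem_ball] at hx
      rw [mem_closedBall] at hy
      calc dist x x₀ ≤ dist x y + dist y x₀ := dist_triangle _ _ _
        _ ≤ r + r := by push_cast; exact add_le_add hx.le hy
        _ = R := by rw [hrdef]; ring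
    · intro x hx
      refine hM x ?_
      rw [mem_closedBall]
      rw [mem_ball] at hx
      rw [mem_closedBall] at hy
      calc dist x x₀ ≤ dist x y + dist y x₀ := dist_triangle _ _ _
        _ ≤ r + r := add_le_add hx.le hy
        _ = R := by rw [hrdef]; ring
  have hxj_lt : ∀ x ∈ ball x₀ ε, ‖x j‖ < ε := by
    intro x hx
    rw [mem_ball, dist_eq_norm] at hx
    have := coord_norm_le x x₀ j
    rw [hx₀j, sub_zero] at this
    exact this.trans_lt hx
  have hw_norm : ∀ θ : ℝ, ‖circleMap 0 r θ‖ = r := by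
    intro θ
    rw [norm_circleMap_zero, abs_of_pos hr]
  have hden_lb : ∀ x ∈ ball x₀ ε, ∀ θ : ℝ,
      r * (r - ε) ≤ ‖circleMap 0 r θ * (circleMap 0 r θ - x j)‖ := by
    intro x hx θ
    rw [norm_mul, hw_norm]
    refine mul_le_mul_of_nonneg_left ?_ hr.le
    have h1 : ‖circleMap 0 r θ‖ - ‖x j‖ ≤ ‖circleMap 0 r θ - x j‖ := norm_sub_norm_le _ _
    rw [hw_norm] at h1
    have := (hxj_lt x hx).le
    linarith
  have hden_pos : 0 < r * (r - ε) := mul_pos hr (by linarith)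
  have hden_ne : ∀ x ∈ ball x₀ ε, ∀ θ : ℝ,
      circleMap 0 r θ * (circleMap 0 r θ - x j) ≠ 0 := by
    intro x hx θ
    have := hden_lb x hx θ
    intro hzero
    rw [hzero, norm_zero] at this
    linarith
  -- the candidate quotient
  set G : Pt n → ℂ := fun x =>
    (2 * Real.pi * I : ℂ)⁻¹ * ∮ w in C(0, r), (w * (w - x j))⁻¹ * f (upd j x w) with hGdef
  have hh1d : ∀ x ∈ ball x₀ ε, DifferentiableOn ℂ (fun w : ℂ => f (upd j x w))
      (closedBall (0 : ℂ) r) := by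
    intro x hx w hw
    rw [mem_closedBall, dist_eq_norm, sub_zero] at hw
    have hmem : upd j x w ∈ Ω := hsubΩ (htube x hx w hw)
    exact ((hdAt _ hmem).comp w (differentiableAt_upd_w j x w)).differentiableWithinAt
  have hval : ∀ x ∈ ball x₀ ε, f x = x j * G x := by
    intro x hx
    by_cases hxj : x j = 0
    · rw [hvan x (hballΩ hx) hxj, hxj, zero_mul]
    · have haball : x j ∈ ball (0 : ℂ) r := by
        rw [mem_ball, dist_eq_norm, sub_zero]
        exact (hxj_lt x hx).trans hεr
      have key1 := (hh1d x hx).circleIntegral_sub_inv_smul haball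
      have key0 := (hh1d x hx).circleIntegral_sub_inv_smul (mem_ball_self hr)
      have h1a : f (upd j x (x j)) = f x := by rw [upd_self']
      have h10 : f (upd j x 0) = 0 := by
        refine hvan _ (hsubΩ (htube x hx 0 (by simpa using hr.le))) ?_
        exact upd_j j x 0
      have hcontsphere : ContinuousOn (fun w : ℂ => f (upd j x w)) (sphere (0 : ℂ) r) :=
        ((hh1d x hx).continuousOn.mono sphere_subset_closedBall)
      have hsne : ∀ w : ℂ, w ∈ sphere (0 : ℂ) r → w ≠ 0 := by
        intro w hw
        rw [mem_sphere_zero_iff_norm] at hw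
        intro h0; rw [h0, norm_zero] at hw; exact hr.ne hw
      have hsna : ∀ w : ℂ, w ∈ sphere (0 : ℂ) r → w - x j ≠ 0 := by
        intro w hw
        rw [mem_sphere_zero_iff_norm] at hw
        intro h0
        have : w = x j := by linear_combination h0
        rw [this] at hw
        have := (hxj_lt x hx).trans hεr
        rw [hw] at this
        exact lt_irrefl _ this
      have hint1 : CircleIntegrable (fun w : ℂ => (w - x j)⁻¹ • f (upd j x w)) 0 r := by
        apply ContinuousOn.circleIntegrable'
        rw [abs_of_pos hr]
        refine ContinuousOn.smul (f := fun w : ℂ => (w - x j)⁻¹)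
          (ContinuousOn.inv₀ (f := fun w : ℂ => w - x j) ?_ ?_) hcontsphere
        · exact (continuousOn_id.sub continuousOn_const)
        · intro w hw; exact hsna w hw
      have hint0 : CircleIntegrable (fun w : ℂ => (w - 0)⁻¹ • f (upd j x w)) 0 r := by
        apply ContinuousOn.circleIntegrable'
        rw [abs_of_pos hr]
        refine ContinuousOn.smul (f := fun w : ℂ => (w - 0)⁻¹)
          (ContinuousOn.inv₀ (f := fun w : ℂ => w - 0) ?_ ?_) hcontsphere
        · exact (continuousOn_id.sub continuousOn_const)
        · intro w hw; simpa using hsne w hw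
      have hcongr : (∮ w in C(0, r), (w * (w - x j))⁻¹ * f (upd j x w))
          = ∮ w in C(0, r),
              (x j)⁻¹ • ((w - x j)⁻¹ • f (upd j x w) - (w - 0)⁻¹ • f (upd j x w)) := by
        refine circleIntegral.integral_congr hr.le fun w hw => ?_
        have h2 : w ≠ 0 := hsne w hw
        have h3 : w - x j ≠ 0 := hsna w hw
        simp only [smul_eq_mul, sub_zero]
        field_simp
        ring
      have hGx : G x = (x j)⁻¹ * f x := by
        simp only [hGdef]
        rw [hcongr, circleIntegral.integral_smul, circleIntegral.integral_sub hint1 hint0,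
          key1, key0]
        simp only [smul_eq_mul] at key1 key0 ⊢
        rw [h1a, h10]
        have h2pi : (2 * Real.pi * I : ℂ) ≠ 0 := Complex.two_pi_I_ne_zero
        field_simp
        simp
      rw [hGx]
      field_simp
  have hdiff : ∀ x₁ ∈ ball x₀ ε, DifferentiableAt ℂ G x₁ := by
    intro x₁ hx₁
    set F : Pt n → ℝ → ℂ := fun x θ =>
      deriv (circleMap 0 r) θ •
        ((circleMap 0 r θ * (circleMap 0 r θ - x j))⁻¹ * f (upd j x (circleMap 0 r θ))) with hFdef
    set F' : Pt n → ℝ → (Pt n →L[ℂ] ℂ) := fun x θ =>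
      deriv (circleMap 0 r) θ •
        ((circleMap 0 r θ * (circleMap 0 r θ - x j))⁻¹ •
            ((fderiv ℂ f (upd j x (circleMap 0 r θ))).comp (Uj j)) +
          f (upd j x (circleMap 0 r θ)) •
            ((-((circleMap 0 r θ * (circleMap 0 r θ - x j)) ^ 2)⁻¹) •
              (circleMap 0 r θ • (-(Pj j))))) with hF'def
    have hε₁ : 0 < ε - dist x₁ x₀ := by rw [mem_ball] at hx₁; linarith
    have hball₁ : ball x₁ (ε - dist x₁ x₀) ⊆ ball x₀ ε := by
      intro x hx; rw [mem_ball] at hx ⊢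
      calc dist x x₀ ≤ dist x x₁ + dist x₁ x₀ := dist_triangle _ _ _
        _ < (ε - dist x₁ x₀) + dist x₁ x₀ := by linarith
        _ = ε := by ring
    have htubemem : ∀ x ∈ ball x₀ ε, ∀ θ : ℝ, upd j x (circleMap 0 r θ) ∈ closedBall x₀ r :=
      fun x hx θ => htube x hx _ (le_of_eq (hw_norm θ))
    have hc1 : Continuous (circleMap 0 r) := continuous_circleMap 0 r
    have hderc : Continuous (fun θ => deriv (circleMap 0 r) θ) := by
      simp only [deriv_circleMap]
      exact hc1.mul continuous_const
    have hFcont : ∀ x ∈ ball x₀ ε, Continuous (fun θ => F x θ) := by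
      intro x hx
      have hupdc : Continuous (fun θ => upd j x (circleMap 0 r θ)) :=
        (continuous_upd_w j x).comp hc1
      have hfc : Continuous (fun θ => f (upd j x (circleMap 0 r θ))) :=
        hf.continuousOn.comp_continuous hupdc fun θ => hsubΩ (htubemem x hx θ)
      have hdenc : Continuous (fun θ => (circleMap 0 r θ * (circleMap 0 r θ - x j))⁻¹) := by
        refine Continuous.inv₀ (hc1.mul (hc1.sub continuous_const)) ?_
        exact fun θ => hden_ne x hx θ
      exact hderc.smul (hdenc.mul hfc)
    haveI : SecondCountableTopology (Pt n →L[ℂ] ℂ) := by infer_instance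
    have hmeas : ∀ᶠ x in 𝓝 x₁, AEStronglyMeasurable (F x)
        (MeasureTheory.volume.restrict (Set.uIoc (0 : ℝ) (2 * Real.pi))) := by
      refine Filter.eventually_of_mem (isOpen_ball.mem_nhds hx₁) fun x hx => ?_
      exact (hFcont x hx).aestronglyMeasurable
    have hint : IntervalIntegrable (F x₁) MeasureTheory.volume 0 (2 * Real.pi) :=
      (hFcont x₁ hx₁).intervalIntegrable _ _
    have hF'meas : AEStronglyMeasurable (F' x₁)
        (MeasureTheory.volume.restrict (Set.uIoc (0 : ℝ) (2 * Real.pi))) := by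
      apply Measurable.aestronglyMeasurable
      have hupdc : Continuous (fun θ => upd j x₁ (circleMap 0 r θ)) :=
        (continuous_upd_w j x₁).comp hc1
      have h1 : Measurable (fun θ => fderiv ℂ f (upd j x₁ (circleMap 0 r θ))) :=
        (measurable_fderiv ℂ f).comp hupdc.measurable
      have hcompc : Continuous (fun L : Pt n →L[ℂ] ℂ => L.comp (Uj j)) :=
        (((ContinuousLinearMap.compSL (Pt n) (Pt n) ℂ (RingHom.id ℂ) (RingHom.id ℂ)).flip)
          (Uj j)).continuous
      have h2 : Measurable (fun θ => (fderiv ℂ f (upd j x₁ (circleMap 0 r θ))).comp (Uj j)) :=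
        hcompc.measurable.comp h1
      have hdenc : Continuous (fun θ => (circleMap 0 r θ * (circleMap 0 r θ - x₁ j))⁻¹) := by
        refine Continuous.inv₀ (hc1.mul (hc1.sub continuous_const)) ?_
        exact fun θ => hden_ne x₁ hx₁ θ
      have hden2c : Continuous
          (fun θ => -((circleMap 0 r θ * (circleMap 0 r θ - x₁ j)) ^ 2)⁻¹) := by
        refine Continuous.neg (Continuous.inv₀ ((hc1.mul (hc1.sub continuous_const)).pow 2) ?_)
        exact fun θ => pow_ne_zero 2 (hden_ne x₁ hx₁ θ)
      have hfc : Continuous (fun θ => f (upd j x₁ (circleMap 0 r θ))) :=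
        hf.continuousOn.comp_continuous hupdc fun θ => hsubΩ (htubemem x₁ hx₁ θ)
      simp only [hF'def]
      exact hderc.measurable.smul
        ((hdenc.measurable.smul h2).add
          (hfc.measurable.smul (hden2c.measurable.smul
            (hc1.measurable.smul measurable_const))))
    have hFderiv : ∀ θ : ℝ, ∀ x ∈ ball x₀ ε, HasFDerivAt (fun x => F x θ) (F' x θ) x := by
      intro θ x hx
      have hmemΩ : upd j x (circleMap 0 r θ) ∈ Ω := hsubΩ (htubemem x hx θ)
      have hu : HasFDerivAt (fun x : Pt n => f (upd j x (circleMap 0 r θ)))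
          ((fderiv ℂ f (upd j x (circleMap 0 r θ))).comp (Uj j)) x :=
        ((hdAt _ hmemΩ).hasFDerivAt).comp x (hasFDerivAt_upd j _ x)
      have hℓ : HasFDerivAt (fun x : Pt n => circleMap 0 r θ * (circleMap 0 r θ - x j))
          (circleMap 0 r θ • (-(Pj j))) x := by
        have h2 : HasFDerivAt (fun x : Pt n => x j) (Pj j) x := (Pj j).hasFDerivAt
        exact (h2.const_sub (circleMap 0 r θ)).const_mul (circleMap 0 r θ)
      have hq : HasFDerivAt (fun x : Pt n => (circleMap 0 r θ * (circleMap 0 r θ - x j))⁻¹)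
          ((-((circleMap 0 r θ * (circleMap 0 r θ - x j)) ^ 2)⁻¹) •
            (circleMap 0 r θ • (-(Pj j)))) x := by
        exact (hasDerivAt_inv (hden_ne x hx θ)).comp_hasFDerivAt x hℓ
      simp only [hFdef, hF'def]
      exact (hq.mul hu).const_smul (deriv (circleMap 0 r) θ)
    set K : ℝ := r * ((r * (r - ε))⁻¹ * ((2 * M + 1) / r * 2) +
      M * (((r * (r - ε)) ^ 2)⁻¹ * (r * 1))) with hKdef
    have hF'bound : ∀ θ : ℝ, ∀ x ∈ ball x₀ ε, ‖F' x θ‖ ≤ K := by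
      intro θ x hx
      have hfdb : ‖fderiv ℂ f (upd j x (circleMap 0 r θ))‖ ≤ (2 * M + 1) / r :=
        hfd_bound _ (htubemem x hx θ)
      have hcompb : ‖(fderiv ℂ f (upd j x (circleMap 0 r θ))).comp (Uj j)‖
          ≤ (2 * M + 1) / r * 2 := by
        refine (ContinuousLinearMap.opNorm_comp_le _ _).trans ?_
        exact mul_le_mul hfdb (norm_Uj_le j) (norm_nonneg _) (by positivity)
      have hfb : ‖f (upd j x (circleMap 0 r θ))‖ ≤ M := hM _ (hrR (htubemem x hx θ))
      have hkn : ‖deriv (circleMap 0 r) θ‖ = r := by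
        rw [deriv_circleMap, norm_mul, hw_norm, Complex.norm_I, mul_one]
      have hinvb : ‖(circleMap 0 r θ * (circleMap 0 r θ - x j))⁻¹‖ ≤ (r * (r - ε))⁻¹ := by
        rw [norm_inv]
        exact inv_anti₀ hden_pos (hden_lb x hx θ)
      have hinv2b : ‖-((circleMap 0 r θ * (circleMap 0 r θ - x j)) ^ 2)⁻¹‖
          ≤ ((r * (r - ε)) ^ 2)⁻¹ := by
        rw [norm_neg, norm_inv, norm_pow]
        refine inv_anti₀ (by positivity) ?_
        exact pow_le_pow_left₀ hden_pos.le (hden_lb x hx θ) 2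
      have hPjneg : ‖-(Pj j)‖ ≤ 1 := by rw [norm_neg]; exact norm_Pj_le j
      have hPjb : ‖circleMap 0 r θ • (-(Pj j))‖ ≤ r * 1 := by
        refine (ContinuousLinearMap.opNorm_smul_le _ _).trans ?_
        exact mul_le_mul (le_of_eq (hw_norm θ)) hPjneg (norm_nonneg _) hr.le
      have hT1 : ‖(circleMap 0 r θ * (circleMap 0 r θ - x j))⁻¹ •
          ((fderiv ℂ f (upd j x (circleMap 0 r θ))).comp (Uj j))‖
          ≤ (r * (r - ε))⁻¹ * ((2 * M + 1) / r * 2) := by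
        refine (ContinuousLinearMap.opNorm_smul_le _ _).trans ?_
        exact mul_le_mul hinvb hcompb (norm_nonneg _) (by positivity)
      have hT2 : ‖f (upd j x (circleMap 0 r θ)) •
          ((-((circleMap 0 r θ * (circleMap 0 r θ - x j)) ^ 2)⁻¹) •
            (circleMap 0 r θ • (-(Pj j))))‖
          ≤ M * (((r * (r - ε)) ^ 2)⁻¹ * (r * 1)) := by
        refine (ContinuousLinearMap.opNorm_smul_le _ _).trans ?_
        refine mul_le_mul hfb ?_ (norm_nonneg _) hM0
        refine (ContinuousLinearMap.opNorm_smul_le _ _).trans ?_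
        exact mul_le_mul hinv2b hPjb (norm_nonneg _) (by positivity)
      rw [hKdef]
      simp only [hF'def]
      refine (ContinuousLinearMap.opNorm_smul_le _ _).trans ?_
      rw [hkn]
      refine mul_le_mul_of_nonneg_left ?_ hr.le
      exact (norm_add_le _ _).trans (add_le_add hT1 hT2)
    have hbound : ∀ᵐ θ ∂(MeasureTheory.volume), θ ∈ Set.uIoc (0 : ℝ) (2 * Real.pi) →
        ∀ x ∈ ball x₁ (ε - dist x₁ x₀), ‖F' x θ‖ ≤ K :=
      MeasureTheory.ae_of_all _ fun θ _ x hx => hF'bound θ x (hball₁ hx)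
    have hdiffae : ∀ᵐ θ ∂(MeasureTheory.volume), θ ∈ Set.uIoc (0 : ℝ) (2 * Real.pi) →
        ∀ x ∈ ball x₁ (ε - dist x₁ x₀), HasFDerivAt (fun x => F x θ) (F' x θ) x :=
      MeasureTheory.ae_of_all _ fun θ _ x hx => hFderiv θ x (hball₁ hx)
    have key := intervalIntegral.hasFDerivAt_integral_of_dominated_of_fderiv_le
      (𝕜 := ℂ) (μ := MeasureTheory.volume) (bound := fun _ => K) (ball_mem_nhds x₁ hε₁) hmeas hint hF'meas
      hbound intervalIntegrable_const hdiffae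
    have hGeq : G = fun x => (2 * Real.pi * I : ℂ)⁻¹ * ∫ θ in (0:ℝ)..(2 * Real.pi), F x θ := by
      funext x
      simp only [hGdef, hFdef, circleIntegral]
    rw [hGeq]
    exact (key.differentiableAt).const_mul _
  exact ⟨ε, hε, G, hdiff, hval⟩

/-- Global division: a holomorphic function on `Ω` vanishing on `Ω ∩ {x j = 0}` is divisible
by `x j` with holomorphic quotient. -/
lemma global_division {Ω : Set (Pt n)} (hΩ : IsOpen Ω) (j : Fin n) {f : Pt n → ℂ}
    (hf : DifferentiableOn ℂ f Ω) (hvan : ∀ x ∈ Ω, x j = 0 → f x = 0) :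
    ∃ g : Pt n → ℂ, DifferentiableOn ℂ g Ω ∧ ∀ x ∈ Ω, f x = x j * g x := by
  classical
  set g : Pt n → ℂ := fun x =>
    if x j = 0 then limUnder (𝓝[≠] (0 : ℂ)) (fun w => f (upd j x w) / w) else f x / x j with hg
  have hdAt : ∀ x ∈ Ω, DifferentiableAt ℂ f x := fun x hx => hf.differentiableAt (hΩ.mem_nhds hx)
  have hmul : ∀ x ∈ Ω, f x = x j * g x := by
    intro x hx
    by_cases hxj : x j = 0
    · rw [hvan x hx hxj, hxj, zero_mul]
    · simp only [hg, if_neg hxj]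
      field_simp
  refine ⟨g, ?_, hmul⟩
  intro x₀ hx₀
  by_cases hx₀j : x₀ j = 0
  · obtain ⟨ε, hε, G, hGdiff, hGmul⟩ := local_division hΩ j hf hvan hx₀ hx₀j
    have heq : ∀ x ∈ ball x₀ ε, g x = G x := by
      intro x hx
      by_cases hxj : x j = 0
      · simp only [hg, if_pos hxj]
        apply Filter.Tendsto.limUnder_eq
        have h1 : Filter.Tendsto (fun w : ℂ => upd j x w) (𝓝[≠] (0 : ℂ)) (𝓝 x) := by
          have h2 := ((continuous_upd_w j x).tendsto 0).mono_left
            (nhdsWithin_le_nhds (s := {(0 : ℂ)}ᶜ))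
          rwa [upd_self j x hxj] at h2
        have h2 : Filter.Tendsto (fun w : ℂ => G (upd j x w)) (𝓝[≠] (0 : ℂ)) (𝓝 (G x)) :=
          ((hGdiff x hx).continuousAt.tendsto).comp h1
        refine h2.congr' ?_
        have hball : ∀ᶠ w in 𝓝[≠] (0 : ℂ), upd j x w ∈ ball x₀ ε :=
          h1.eventually (isOpen_ball.eventually_mem hx)
        filter_upwards [hball, self_mem_nhdsWithin] with w hw1 hw2
        have hw0 : w ≠ 0 := hw2
        have hfw := hGmul _ hw1
        rw [upd_j] at hfw
        rw [hfw]
        field_simp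
      · simp only [hg, if_neg hxj]
        rw [hGmul x hx]
        field_simp
    have hev : g =ᶠ[𝓝 x₀] G :=
      Filter.eventuallyEq_of_mem (isOpen_ball.mem_nhds (mem_ball_self hε)) heq
    exact ((hGdiff x₀ (mem_ball_self hε)).congr_of_eventuallyEq hev).differentiableWithinAt
  · have hopen : IsOpen {x : Pt n | x j ≠ 0} :=
      isOpen_compl_singleton.preimage (continuous_apply j)
    have hj : DifferentiableAt ℂ (fun x : Pt n => x j) x₀ :=
      (ContinuousLinearMap.proj (R := ℂ) (φ := fun _ : Fin n => ℂ) j).differentiableAt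
    have hdiv : DifferentiableAt ℂ (fun x : Pt n => f x / x j) x₀ := by
      simp only [div_eq_mul_inv]
      exact (hdAt x₀ hx₀).mul (hj.inv hx₀j)
    have hev : g =ᶠ[𝓝 x₀] fun x => f x / x j := by
      refine Filter.eventuallyEq_of_mem (hopen.mem_nhds hx₀j) fun x hx => ?_
      simp only [hg, if_neg hx]
    exact (hdiv.congr_of_eventuallyEq hev).differentiableWithinAt

end Stmt6Aux

open Stmt6Aux Metric in
/-- If `(dz_j/z_j) ∧ α` extends holomorphically on `Ω` for every `j` in a
set `S` of indices, then for every `r ≥ 1` and every choice of `r` distinct indices in `S`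
(i.e. every `J ⊆ S` with `J.card = r`) the iterated wedge
`(dz_{j₁}/z_{j₁}) ∧ ⋯ ∧ (dz_{j_r}/z_{j_r}) ∧ α` extends to a holomorphic `(k+r)`-form on `Ω`. -/
theorem stmt6 {n k : ℕ} (Ω : Set (Pt n)) (hΩ : IsOpen Ω) (S : Finset (Fin n))
    (α : Form n k) (hα : HoloOn Ω α)
    (h : ∀ j ∈ S,
      ExtendsHolo Ω (logWedge {j} (Finset.card_singleton j) α) {z | z j = 0}) :
    ∀ (r : ℕ), 1 ≤ r → ∀ (J : Finset (Fin n)), J ⊆ S → ∀ hJ : J.card = r,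
      ExtendsHolo Ω (logWedge J hJ α) {z | ∃ j ∈ J, z j = 0} := by
  classical
  intro r _hr J hJS hJ
  have main : ∀ J : Finset (Fin n), J ⊆ S → ∀ u : Idx n k, Disjoint u.1 J →
      ∃ g : Pt n → ℂ, DifferentiableOn ℂ g Ω ∧
        ∀ z ∈ Ω, α u z = (∏ j ∈ J, z j) * g z := by
    intro J
    induction J using Finset.induction_on with
    | empty =>
      intro _ u _
      exact ⟨α u, hα u, fun z _ => by simp⟩
    | @insert j₀ J' hj₀ ih =>
      intro hsub u hdisj
      have hJ'S : J' ⊆ S := (Finset.subset_insert j₀ J').trans hsub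
      have hj₀S : j₀ ∈ S := hsub (Finset.mem_insert_self j₀ J')
      have hj₀u : j₀ ∉ u.1 := fun hmem =>
        (Finset.disjoint_left.1 hdisj hmem) (Finset.mem_insert_self _ _)
      have hdisj' : Disjoint u.1 J' := hdisj.mono_right (Finset.subset_insert j₀ J')
      obtain ⟨g', hg'd, hg'⟩ := ih hJ'S u hdisj'
      obtain ⟨γ, hγd, hγ⟩ := h j₀ hj₀S
      set s : Idx n (k + 1) :=
        ⟨insert j₀ u.1, by rw [Finset.card_insert_of_notMem hj₀u, u.2]⟩ with hs
      -- The value of `γ` off the hyperplane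
      have hγval : ∀ x ∈ Ω, x j₀ ≠ 0 → γ s x = (x j₀)⁻¹ * α u x := by
        intro x hx hxj
        have h1 := hγ s x ⟨hx, hxj⟩
        rw [h1]
        have hsub0 : ({j₀} : Finset (Fin n)) ⊆ s.1 := by
          simp [hs]
        have hset : s.1 \ {j₀} = u.1 := by
          rw [Finset.sdiff_singleton_eq_erase]
          exact Finset.erase_insert hj₀u
        simp only [logWedge]
        rw [dif_pos hsub0, Finset.prod_singleton]
        congr 1
        congr 1
        exact Subtype.ext hset
      -- Claim A : α u = z_{j₀} · γ s on Ω
      have hA : ∀ z ∈ Ω, α u z = z j₀ * γ s z := by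
        intro z hz
        have hcont : ContinuousOn (fun x => α u x - x j₀ * γ s x) Ω :=
          ((hα u).continuousOn).sub
            (((continuous_apply j₀).continuousOn).mul ((hγd s).continuousOn))
        have hvanA : ∀ x ∈ Ω, (∀ i ∈ ({j₀} : Finset (Fin n)), x i ≠ 0) →
            (∀ i, i ∉ ({j₀} : Finset (Fin n)) → x i = z i) →
            α u x - x j₀ * γ s x = 0 := by
          intro x hx hne _
          have hxj : x j₀ ≠ 0 := hne j₀ (Finset.mem_singleton_self _)
          rw [hγval x hx hxj]
          field_simp
          simp
        have := perturb_limit hΩ hcont {j₀} hz hvanA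
        linear_combination this
      -- Claim C : g' vanishes on Ω ∩ {z j₀ = 0}
      have hC : ∀ z ∈ Ω, z j₀ = 0 → g' z = 0 := by
        intro z hz hzj₀
        refine perturb_limit hΩ hg'd.continuousOn J' hz ?_
        intro x hx hne hfix
        have hxj₀ : x j₀ = 0 := by rw [hfix j₀ hj₀, hzj₀]
        have h1 : α u x = 0 := by rw [hA x hx, hxj₀, zero_mul]
        have h2 := hg' x hx
        have hprod : (∏ j ∈ J', x j) ≠ 0 := Finset.prod_ne_zero_iff.2 hne
        rw [h1] at h2
        exact ((mul_eq_zero.1 h2.symm).resolve_left hprod)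
      obtain ⟨g, hgd, hgmul⟩ := global_division hΩ j₀ hg'd hC
      refine ⟨g, hgd, fun z hz => ?_⟩
      rw [Finset.prod_insert hj₀, hg' z hz, hgmul z hz]
      ring
  have hP := main J hJS
  choose g hgd hgmul using hP
  refine ⟨fun t z => if ht : J ⊆ t.1 then
      g ⟨t.1 \ J, by rw [Finset.card_sdiff_of_subset ht, t.2, hJ]; omega⟩ Finset.sdiff_disjoint z
    else 0, ?_, ?_⟩
  · intro t
    by_cases ht : J ⊆ t.1
    · simp only [dif_pos ht]
      exact hgd _ _
    · simp only [dif_neg ht]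
      exact differentiableOn_const 0
  · intro t z hz
    obtain ⟨hzΩ, hzbad⟩ := hz
    simp only [Set.mem_setOf_eq] at hzbad
    push_neg at hzbad
    by_cases ht : J ⊆ t.1
    · simp only [dif_pos ht, logWedge]
      rw [hgmul _ _ z hzΩ]
      have hprod : (∏ j ∈ J, z j) ≠ 0 := Finset.prod_ne_zero_iff.2 fun j hj => hzbad j hj
      rw [Finset.prod_inv_distrib, ← mul_assoc, inv_mul_cancel₀ hprod, one_mul]
    · simp only [dif_neg ht, logWedge]
end
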